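/- Let E ⊆ ℝ^d, let λ be a measure supported on E, let F : E → ℝ^l be measurable, and let 𝓕 = {ν_θ(dx) = exp(⟨θ, F(x)⟩ − A(θ)) λ(dx) : θ ∈ ℝ^{l}} be the natural exponential family with sufficient statistic F and base measure λ (A(θ) the log-partition function, assumed finite for the relevant θ). Let μ be a probability measure on E that is mutually absolutely continuous with every ν_θ ∈ 𝓕, and suppose θ_M ∈ ℝ^l satisfies ∫ F dν_{θ_M} = ∫ F dμ. Then for every θ ∈ ℝ^l, KL(μ‖ν_{θ_M}) − KL(μ‖ν_θ) = −KL(ν_{θ_M}‖ν_θ) ≤ 0; in particular ν_{θ_M} = argmin_{ν ∈ 𝓕} KL(μ‖ν). -/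

import Mathlib

open MeasureTheory Filter
open scoped NNReal ENNReal

noncomputable section

/-- ℓ¹ distance on `ℝ^d`. -/
def l1dist {d : ℕ} (x y : Fin d → ℝ) : ℝ := ∑ i, |x i - y i|

/-- The set of couplings of two measures. -/
def couplings {α : Type*} [MeasurableSpace α] (μ ν : Measure α) : Set (Measure (α × α)) :=
  {π | IsProbabilityMeasure π ∧ π.map Prod.fst = μ ∧ π.map Prod.snd = ν}

/-- Optimal transport cost with ground cost `c`. -/
def Wcost {α : Type*} [MeasurableSpace α] (c : α → α → ℝ) (μ ν : Measure α) : ℝ :=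
  sInf ((fun π : Measure (α × α) => ∫ p, c p.1 p.2 ∂π) '' couplings μ ν)

/-- 1-Wasserstein distance on `ℝ^d` with ℓ¹ ground cost. -/
def W1 {d : ℕ} (μ ν : Measure (Fin d → ℝ)) : ℝ := Wcost l1dist μ ν

/-- Boltzmann–Gibbs transformation `Ψ_g(ν)(dx) = g(x) ν(dx) / ν(g)`. -/
def BG {d : ℕ} (g : (Fin d → ℝ) → ℝ) (ν : Measure (Fin d → ℝ)) : Measure (Fin d → ℝ) :=
  ν.withDensity (fun x => ENNReal.ofReal (g x / ∫ y, g y ∂ν))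

/-- Real-valued Kullback–Leibler divergence `∫ log(dμ/dν) dμ`
(the generalized entropy of the paper is `H_ν(μ) = -KL μ ν`). -/
def KL {α : Type*} [MeasurableSpace α] (μ ν : Measure α) : ℝ :=
  ∫ x, Real.log ((μ.rnDeriv ν x).toReal) ∂μ

/-- Convolution of two measures on `ℝ^d`. -/
def mconv {d : ℕ} (μ ν : Measure (Fin d → ℝ)) : Measure (Fin d → ℝ) :=
  (μ.prod ν).map (fun p => p.1 + p.2)

/-- Empirical measure of a finite family of points. -/
def empMeasure {d N : ℕ} (x : Fin N → (Fin d → ℝ)) : Measure (Fin d → ℝ) :=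
  (N : ℝ≥0∞)⁻¹ • ∑ i, Measure.dirac (x i)

/-- moment projection onto a natural exponential family:
if `∫ F dν_{θM} = ∫ F dμ` then for every `θ`,
`KL(μ‖ν_{θM}) − KL(μ‖ν_θ) = −KL(ν_{θM}‖ν_θ) ≤ 0`, so `ν_{θM}` minimizes `KL(μ‖·)` over the family. -/
theorem statement2 {d l : ℕ} (E : Set (Fin d → ℝ))
    (lam : Measure (Fin d → ℝ)) (hlamE : lam Eᶜ = 0)
    (F : (Fin d → ℝ) → (Fin l → ℝ)) (hF : Measurable F)
    (hZpos : ∀ θ : Fin l → ℝ, 0 < ∫ x, Real.exp (∑ i, θ i * F x i) ∂lam)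
    (hZint : ∀ θ : Fin l → ℝ, Integrable (fun x => Real.exp (∑ i, θ i * F x i)) lam)
    (A : (Fin l → ℝ) → ℝ)
    (hA : ∀ θ, A θ = Real.log (∫ x, Real.exp (∑ i, θ i * F x i) ∂lam))
    (ν : (Fin l → ℝ) → Measure (Fin d → ℝ))
    (hν : ∀ θ, ν θ =
      lam.withDensity (fun x => ENNReal.ofReal (Real.exp ((∑ i, θ i * F x i) - A θ))))
    (hνProb : ∀ θ, IsProbabilityMeasure (ν θ))
    (μ : Measure (Fin d → ℝ)) [IsProbabilityMeasure μ]
    (hAC : ∀ θ, μ ≪ ν θ ∧ ν θ ≪ μ)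
    (hFμ : Integrable F μ) (hFν : ∀ θ, Integrable F (ν θ))
    (hKLfin : ∀ θ, Integrable (fun x => Real.log ((μ.rnDeriv (ν θ) x).toReal)) μ)
    (θM : Fin l → ℝ) (hθM : (∫ x, F x ∂(ν θM)) = ∫ x, F x ∂μ) :
    ∀ θ, KL μ (ν θM) - KL μ (ν θ) = -(KL (ν θM) (ν θ))
      ∧ KL μ (ν θM) - KL μ (ν θ) ≤ 0
      ∧ KL μ (ν θM) ≤ KL μ (ν θ) := by
  intro θ
  haveI := hνProb θ
  haveI := hνProb θM
  -- basic measurability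
  have hLmeas : ∀ t : Fin l → ℝ, Measurable fun x => ∑ i, t i * F x i := fun t =>
    Finset.measurable_sum _ fun i _ => measurable_const.mul ((measurable_pi_apply i).comp hF)
  have hgmeas : ∀ t : Fin l → ℝ,
      Measurable fun x => ENNReal.ofReal (Real.exp ((∑ i, t i * F x i) - A t)) := fun t =>
    (Real.measurable_exp.comp ((hLmeas t).sub measurable_const)).ennreal_ofReal
  have hratio_meas : Measurable fun x =>
      ENNReal.ofReal (Real.exp ((((∑ i, θM i * F x i) - A θM)) - ((∑ i, θ i * F x i) - A θ))) :=
    (Real.measurable_exp.comp (((hLmeas θM).sub measurable_const).sub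
      ((hLmeas θ).sub measurable_const))).ennreal_ofReal
  -- ν θM as a density against ν θ
  have hw : ν θM = (ν θ).withDensity (fun x =>
      ENNReal.ofReal (Real.exp ((((∑ i, θM i * F x i) - A θM)) - ((∑ i, θ i * F x i) - A θ)))) := by
    rw [hν θ, hν θM, ← withDensity_mul lam (hgmeas θ) hratio_meas]
    congr 1
    funext x
    simp only [Pi.mul_apply]
    rw [← ENNReal.ofReal_mul (Real.exp_nonneg _), ← Real.exp_add]
    congr 1
    ring
  have hrn : (ν θM).rnDeriv (ν θ) =ᵐ[ν θ] fun x =>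
      ENNReal.ofReal (Real.exp ((((∑ i, θM i * F x i) - A θM)) - ((∑ i, θ i * F x i) - A θ))) := by
    rw [hw]
    exact Measure.rnDeriv_withDensity (ν θ) hratio_meas
  have hμθ : μ ≪ ν θ := (hAC θ).1
  have hμθM : μ ≪ ν θM := (hAC θM).1
  have hMθ : ν θM ≪ ν θ := (hAC θM).2.trans hμθ
  -- the log-likelihood ratio of ν θM against ν θ
  have hlogθ : ∀ᵐ x ∂(ν θ), Real.log (((ν θM).rnDeriv (ν θ) x).toReal)
      = ((∑ i, θM i * F x i) - A θM) - ((∑ i, θ i * F x i) - A θ) :=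
    hrn.mono fun x hx => by
      rw [hx, ENNReal.toReal_ofReal (Real.exp_nonneg _), Real.log_exp]
  have hchain : μ.rnDeriv (ν θM) * (ν θM).rnDeriv (ν θ) =ᵐ[ν θ] μ.rnDeriv (ν θ) :=
    Measure.rnDeriv_mul_rnDeriv hμθM
  have hpos : ∀ᵐ x ∂μ, 0 < μ.rnDeriv (ν θM) x := by
    haveI : μ.HaveLebesgueDecomposition (ν θM) :=
      Measure.haveLebesgueDecomposition_of_sigmaFinite μ (ν θM)
    exact Measure.rnDeriv_pos hμθM
  have hfin : ∀ᵐ x ∂μ, μ.rnDeriv (ν θM) x < ∞ :=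
    (Measure.rnDeriv_lt_top μ (ν θM)).filter_mono hμθM.ae_le
  -- decomposition of the log-likelihood ratio of μ against ν θ
  have hdecomp : ∀ᵐ x ∂μ, Real.log ((μ.rnDeriv (ν θ) x).toReal)
      = Real.log ((μ.rnDeriv (ν θM) x).toReal)
        + (((∑ i, θM i * F x i) - A θM) - ((∑ i, θ i * F x i) - A θ)) := by
    filter_upwards [hchain.filter_mono hμθ.ae_le, hrn.filter_mono hμθ.ae_le, hpos, hfin]
      with x hcx hrx hpx hfx
    have h1 : (μ.rnDeriv (ν θM) x).toReal ≠ 0 :=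
      (ENNReal.toReal_pos hpx.ne' hfx.ne).ne'
    rw [← hcx, Pi.mul_apply, hrx, ENNReal.toReal_mul, ENNReal.toReal_ofReal (Real.exp_nonneg _),
      Real.log_mul h1 (Real.exp_ne_zero _), Real.log_exp]
  -- integrability of coordinate functions and of the linear statistic
  have hcoord : ∀ (ρ : Measure (Fin d → ℝ)), Integrable F ρ →
      ∀ i, Integrable (fun x => F x i) ρ := fun ρ hFρ i =>
    (ContinuousLinearMap.proj (R := ℝ) (φ := fun _ : Fin l => ℝ) i).integrable_comp hFρ
  have hlinInt : ∀ (ρ : Measure (Fin d → ℝ)), Integrable F ρ → IsProbabilityMeasure ρ →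
      Integrable (fun x => ((∑ i, θM i * F x i) - A θM) - ((∑ i, θ i * F x i) - A θ)) ρ := by
    intro ρ hFρ hρ
    have hi : ∀ t : Fin l → ℝ, Integrable (fun x => ∑ i, t i * F x i) ρ := fun t =>
      integrable_finset_sum _ fun i _ => (hcoord ρ hFρ i).const_mul _
    exact ((hi θM).sub (integrable_const _)).sub ((hi θ).sub (integrable_const _))
  -- integral of the linear statistic
  have hlinIntegral : ∀ (ρ : Measure (Fin d → ℝ)), Integrable F ρ → IsProbabilityMeasure ρ →
      ∫ x, (((∑ i, θM i * F x i) - A θM) - ((∑ i, θ i * F x i) - A θ)) ∂ρ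
        = ((∑ i, θM i * (∫ x, F x ∂ρ) i) - A θM) - ((∑ i, θ i * (∫ x, F x ∂ρ) i) - A θ) := by
    intro ρ hFρ hρ
    haveI := hρ
    have hi : ∀ t : Fin l → ℝ, Integrable (fun x => ∑ i, t i * F x i) ρ := fun t =>
      integrable_finset_sum _ fun i _ => (hcoord ρ hFρ i).const_mul _
    have hsum : ∀ t : Fin l → ℝ,
        ∫ x, (∑ i, t i * F x i) ∂ρ = ∑ i, t i * (∫ x, F x ∂ρ) i := by
      intro t
      rw [integral_finset_sum _ fun i _ => (hcoord ρ hFρ i).const_mul _]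
      refine Finset.sum_congr rfl fun i _ => ?_
      rw [integral_const_mul]
      congr 1
      have h := (ContinuousLinearMap.proj (R := ℝ) (φ := fun _ : Fin l => ℝ)
        i).integral_comp_comm hFρ
      simpa [ContinuousLinearMap.proj_apply] using h
    have h1 : Integrable (fun x => (∑ i, θM i * F x i) - A θM) ρ :=
      (hi θM).sub (integrable_const _)
    have h2 : Integrable (fun x => (∑ i, θ i * F x i) - A θ) ρ :=
      (hi θ).sub (integrable_const _)
    rw [integral_sub h1 h2, integral_sub (hi θM) (integrable_const _),
      integral_sub (hi θ) (integrable_const _), integral_const, integral_const, hsum, hsum]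
    simp
  -- the key identity : KL μ (ν θ) = KL μ (ν θM) + c
  have hKLμ : KL μ (ν θ) = KL μ (ν θM)
      + (((∑ i, θM i * (∫ x, F x ∂μ) i) - A θM) - ((∑ i, θ i * (∫ x, F x ∂μ) i) - A θ)) := by
    have h0 : KL μ (ν θ) = ∫ x, (Real.log ((μ.rnDeriv (ν θM) x).toReal)
        + (((∑ i, θM i * F x i) - A θM) - ((∑ i, θ i * F x i) - A θ))) ∂μ :=
      integral_congr_ae hdecomp
    rw [h0, integral_add (hKLfin θM) (hlinInt μ hFμ ‹_›), hlinIntegral μ hFμ ‹_›]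
    rfl
  -- KL (ν θM) (ν θ) equals the same constant c
  have hKLM : KL (ν θM) (ν θ)
      = ((∑ i, θM i * (∫ x, F x ∂μ) i) - A θM) - ((∑ i, θ i * (∫ x, F x ∂μ) i) - A θ) := by
    have h1 : KL (ν θM) (ν θ)
        = ∫ x, (((∑ i, θM i * F x i) - A θM) - ((∑ i, θ i * F x i) - A θ)) ∂(ν θM) :=
      integral_congr_ae (hlogθ.filter_mono hMθ.ae_le)
    rw [h1, hlinIntegral (ν θM) (hFν θM) ‹_›, hθM]
  -- the constant is nonnegative
  have hexp_int : ∫ x, Real.exp (((∑ i, θ i * F x i) - A θ) - ((∑ i, θM i * F x i) - A θM))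
      ∂(ν θM) = 1 ∧ Integrable
      (fun x => Real.exp (((∑ i, θ i * F x i) - A θ) - ((∑ i, θM i * F x i) - A θM))) (ν θM) := by
    have hfnn : Measurable fun x => Real.toNNReal (Real.exp ((∑ i, θM i * F x i) - A θM)) :=
      (Real.measurable_exp.comp ((hLmeas θM).sub measurable_const)).real_toNNReal
    have hwd : ν θM = lam.withDensity fun x =>
        ((Real.toNNReal (Real.exp ((∑ i, θM i * F x i) - A θM)) : ℝ≥0) : ℝ≥0∞) := hν θM
    have hcomb : ∀ x : Fin d → ℝ,
        (Real.toNNReal (Real.exp ((∑ i, θM i * F x i) - A θM)) : ℝ)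
          * Real.exp (((∑ i, θ i * F x i) - A θ) - ((∑ i, θM i * F x i) - A θM))
        = Real.exp ((∑ i, θ i * F x i) - A θ) := by
      intro x
      rw [Real.coe_toNNReal _ (Real.exp_nonneg _), ← Real.exp_add]
      congr 1
      ring
    have hintlam : Integrable (fun x => Real.exp ((∑ i, θ i * F x i) - A θ)) lam := by
      have h := (hZint θ).div_const (Real.exp (A θ))
      refine h.congr (Filter.Eventually.of_forall fun x => ?_)
      simp [Real.exp_sub]
    have hInt : Integrable
        (fun x => Real.exp (((∑ i, θ i * F x i) - A θ) - ((∑ i, θM i * F x i) - A θM)))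
        (ν θM) := by
      rw [hwd]
      refine (integrable_withDensity_iff_integrable_smul hfnn).2 ?_
      refine hintlam.congr (Filter.Eventually.of_forall fun x => ?_)
      simp only [NNReal.smul_def, smul_eq_mul]
      exact (hcomb x).symm
    constructor
    · rw [hwd, integral_withDensity_eq_integral_smul hfnn]
      have : ∫ x, Real.exp ((∑ i, θ i * F x i) - A θ) ∂lam = 1 := by
        have hz := hZpos θ
        simp_rw [Real.exp_sub]
        rw [integral_div, hA θ, Real.exp_log hz, div_self hz.ne']
      rw [← this]
      refine integral_congr_ae (Filter.Eventually.of_forall fun x => ?_)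
      simp only [NNReal.smul_def, smul_eq_mul]
      exact hcomb x
    · exact hInt
  have hcnonneg : 0 ≤ ((∑ i, θM i * (∫ x, F x ∂μ) i) - A θM)
      - ((∑ i, θ i * (∫ x, F x ∂μ) i) - A θ) := by
    rw [← hθM, ← hlinIntegral (ν θM) (hFν θM) ‹_›]
    have hptwise : ∀ x : Fin d → ℝ,
        1 - Real.exp (((∑ i, θ i * F x i) - A θ) - ((∑ i, θM i * F x i) - A θM))
          ≤ ((∑ i, θM i * F x i) - A θM) - ((∑ i, θ i * F x i) - A θ) := by
      intro x
      have := Real.add_one_le_exp ((((∑ i, θ i * F x i) - A θ) - ((∑ i, θM i * F x i) - A θM)))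
      linarith
    have h1int : Integrable (fun x : Fin d → ℝ =>
        1 - Real.exp (((∑ i, θ i * F x i) - A θ) - ((∑ i, θM i * F x i) - A θM))) (ν θM) :=
      (integrable_const _).sub hexp_int.2
    have hmono := integral_mono h1int (hlinInt (ν θM) (hFν θM) ‹_›) hptwise
    have h2 : ∫ x, (1 - Real.exp (((∑ i, θ i * F x i) - A θ)
        - ((∑ i, θM i * F x i) - A θM))) ∂(ν θM) = 0 := by
      rw [integral_sub (integrable_const _) hexp_int.2, hexp_int.1]
      simp
    rw [h2] at hmono
    exact hmono
  refine ⟨by rw [hKLμ, hKLM]; ring, ?_, ?_⟩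
  · rw [hKLμ]; linarith
  · rw [hKLμ]; linarith
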